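/- Feasible-region inclusion: the feasible set of the proposed clustered UC (constraints (1)–(6),(8),(11)–(24), projected onto the aggregate variables (u,p,r⁺,r⁻,y,z)) is contained in the feasible set of the classic clustered UC (constraints (1)–(10)); hence the optimal cost of the proposed CUC is greater than or equal to that of the classic CUC for any objective that is nondecreasing in cost. -/

import Mathlib

/-- Aggregate clustered-UC variable trajectories `(u, p, r⁺, r⁻, y, z)`. -/
abbrev CUCVars : Type := (ℕ → ℝ) × (ℕ → ℝ) × (ℕ → ℝ) × (ℕ → ℝ) × (ℕ → ℝ) × (ℕ → ℝ)

/-- Feasible set of the classic clustered UC, constraints (1)–(10). -/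
def ClassicFeasible (G T TU TD : ℕ) (Pmax Pmin SU SD RU RD : ℝ) (x : CUCVars) : Prop :=
  let u := x.1; let p := x.2.1; let rp := x.2.2.1; let rm := x.2.2.2.1
  let y := x.2.2.2.2.1; let z := x.2.2.2.2.2
  (∀ t, t ≤ T → (∃ n : ℤ, u t = n) ∧ (∃ n : ℤ, y t = n) ∧ (∃ n : ℤ, z t = n)) ∧
  (∀ t, t ≤ T →
    0 ≤ u t ∧ u t ≤ G ∧ 0 ≤ y t ∧ 0 ≤ z t ∧ 0 ≤ p t ∧ 0 ≤ rp t ∧ 0 ≤ rm t) ∧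
  (∀ t, 1 ≤ t → t ≤ T → u t - u (t - 1) = y t - z t) ∧
  (∀ t, TU ≤ t → t ≤ T → ∑ i ∈ Finset.Icc (t + 1 - TU) t, y i ≤ u t) ∧
  (∀ t, TD ≤ t → t ≤ T → ∑ i ∈ Finset.Icc (t + 1 - TD) t, z i ≤ (G : ℝ) - u t) ∧
  (2 ≤ TU → ∀ t, 1 ≤ t → t + 1 ≤ T →
    p t + rp t ≤ (Pmax - Pmin) * u t - (Pmax - SU) * y t - (Pmax - SD) * z (t + 1)) ∧
  (TU = 1 → ∀ t, 1 ≤ t → t + 1 ≤ T →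
    p t + rp t ≤ (Pmax - Pmin) * u t - (Pmax - SD) * z (t + 1) - max (SD - SU) 0 * y t ∧
    p t + rp t ≤ (Pmax - Pmin) * u t - (Pmax - SU) * y t - max (SU - SD) 0 * z (t + 1)) ∧
  (∀ t, t ≤ T → 0 ≤ p t - rm t) ∧
  (∀ t, 1 ≤ t → t ≤ T → p t - p (t - 1) + rp t ≤ RU * u t) ∧
  (∀ t, 1 ≤ t → t ≤ T → -(p t) + p (t - 1) + rm t ≤ RD * u (t - 1))

/-- Feasible set of the proposed clustered UC, constraints (1)–(6),(8),(11)–(24), projected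
onto the aggregate variables. -/
def ProposedFeasible (G T TU TD : ℕ) (Pmax Pmin SU SD RU RD : ℝ) (x : CUCVars) : Prop :=
  let u := x.1; let p := x.2.1; let rp := x.2.2.1; let rm := x.2.2.2.1
  let y := x.2.2.2.2.1; let z := x.2.2.2.2.2
  (∀ t, t ≤ T → (∃ n : ℤ, u t = n) ∧ (∃ n : ℤ, y t = n) ∧ (∃ n : ℤ, z t = n)) ∧
  (∀ t, t ≤ T →
    0 ≤ u t ∧ u t ≤ G ∧ 0 ≤ y t ∧ 0 ≤ z t ∧ 0 ≤ p t ∧ 0 ≤ rp t ∧ 0 ≤ rm t) ∧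
  (∀ t, 1 ≤ t → t ≤ T → u t - u (t - 1) = y t - z t) ∧
  (∀ t, TU ≤ t → t ≤ T → ∑ i ∈ Finset.Icc (t + 1 - TU) t, y i ≤ u t) ∧
  (∀ t, TD ≤ t → t ≤ T → ∑ i ∈ Finset.Icc (t + 1 - TD) t, z i ≤ (G : ℝ) - u t) ∧
  (2 ≤ TU → ∀ t, 1 ≤ t → t + 1 ≤ T →
    p t + rp t ≤ (Pmax - Pmin) * u t - (Pmax - SU) * y t - (Pmax - SD) * z (t + 1)) ∧
  (TU = 1 → ∀ t, 1 ≤ t → t + 1 ≤ T →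
    p t + rp t ≤ (Pmax - Pmin) * u t - (Pmax - SD) * z (t + 1) - max (SD - SU) 0 * y t ∧
    p t + rp t ≤ (Pmax - Pmin) * u t - (Pmax - SU) * y t - max (SU - SD) 0 * z (t + 1)) ∧
  ∃ ut pt rpt rmt : Fin G → ℕ → ℝ,
    (∀ g t, t ≤ T → ut g t = 0 ∨ ut g t = 1) ∧
    (∀ (g : Fin G) (h : (g : ℕ) + 1 < G) (t : ℕ), t ≤ T →
      ut ⟨(g : ℕ) + 1, h⟩ t ≤ ut g t) ∧
    (∀ g t, t ≤ T → 0 ≤ pt g t ∧ 0 ≤ rpt g t ∧ 0 ≤ rmt g t) ∧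
    (∀ g t, t ≤ T → pt g t + rpt g t ≤ (Pmax - Pmin) * ut g t) ∧
    (∀ g t, t ≤ T → rmt g t ≤ pt g t) ∧
    (∀ t, t ≤ T → u t = ∑ g, ut g t) ∧
    (∀ t, t ≤ T → rp t = ∑ g, rpt g t) ∧
    (∀ t, t ≤ T → rm t = ∑ g, rmt g t) ∧
    (∀ t, t ≤ T → p t = ∑ g, pt g t) ∧
    (2 ≤ TU → ∀ g t, 1 ≤ t → t ≤ T →
      pt g t + rpt g t ≤ (SU - Pmin) * ut g t + (Pmax - SU) * ut g (t - 1)) ∧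
    (2 ≤ TU → ∀ g t, 1 ≤ t → t + 1 ≤ T →
      pt g t + rpt g t ≤ (SD - Pmin) * ut g t + (Pmax - SD) * ut g (t + 1)) ∧
    (TU = 1 → ∀ g t, 1 ≤ t → t + 1 ≤ T →
      pt g t + rpt g t ≤ (SU - Pmax + SD - Pmin) * ut g t
        + (Pmax - SU) * ut g (t - 1) + (Pmax - SD) * ut g (t + 1)) ∧
    (∀ g t, 1 ≤ t → t ≤ T → pt g t - pt g (t - 1) + rpt g t ≤ RU * ut g t) ∧
    (∀ g t, 1 ≤ t → t ≤ T → -(pt g t) + pt g (t - 1) + rmt g t ≤ RD * ut g (t - 1))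

/-- The proposed CUC feasible set is contained in the classic CUC feasible set, hence for
any cost to be minimized the optimal cost of the proposed CUC is at least that of the
classic CUC. -/
theorem proposed_subset_classic (G T TU TD : ℕ) (Pmax Pmin SU SD RU RD : ℝ)
    (hPmin : 0 ≤ Pmin) (hSU : Pmin ≤ SU) (hSU' : SU ≤ Pmax)
    (hSD : Pmin ≤ SD) (hSD' : SD ≤ Pmax) (hRU : 0 < RU) (hRD : 0 < RD)
    (hTU : 1 ≤ TU) (hTD : 1 ≤ TD) :
    {x : CUCVars | ProposedFeasible G T TU TD Pmax Pmin SU SD RU RD x} ⊆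
      {x : CUCVars | ClassicFeasible G T TU TD Pmax Pmin SU SD RU RD x} ∧
    ∀ cost : CUCVars → ℝ,
      {x : CUCVars | ProposedFeasible G T TU TD Pmax Pmin SU SD RU RD x}.Nonempty →
      BddBelow (cost '' {x | ClassicFeasible G T TU TD Pmax Pmin SU SD RU RD x}) →
      sInf (cost '' {x | ClassicFeasible G T TU TD Pmax Pmin SU SD RU RD x}) ≤
        sInf (cost '' {x | ProposedFeasible G T TU TD Pmax Pmin SU SD RU RD x}) := by
  have hsub : {x : CUCVars | ProposedFeasible G T TU TD Pmax Pmin SU SD RU RD x} ⊆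
      {x : CUCVars | ClassicFeasible G T TU TD Pmax Pmin SU SD RU RD x} := by
    intro x hx
    simp only [Set.mem_setOf_eq, ProposedFeasible, ClassicFeasible] at *
    obtain ⟨h1, h2, h3, h4, h5, h6, h7, ut, pt, rpt, rmt, hbin, hord, hnn, hcap, hrmle,
      hu, hrp, hrm, hp, _, _, _, hru, hrd⟩ := hx
    refine ⟨h1, h2, h3, h4, h5, h6, h7, ?_, ?_, ?_⟩
    · intro t ht
      rw [hp t ht, hrm t ht, ← Finset.sum_sub_distrib]
      exact Finset.sum_nonneg fun g _ => sub_nonneg.2 (hrmle g t ht)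
    · intro t ht1 htT
      have ht1T : t - 1 ≤ T := le_trans (Nat.sub_le t 1) htT
      rw [hp t htT, hp (t - 1) ht1T, hrp t htT, hu t htT]
      calc (∑ g, pt g t) - (∑ g, pt g (t - 1)) + ∑ g, rpt g t
          = ∑ g, (pt g t - pt g (t - 1) + rpt g t) := by
            rw [Finset.sum_add_distrib, Finset.sum_sub_distrib]
        _ ≤ ∑ g, RU * ut g t := Finset.sum_le_sum fun g _ => hru g t ht1 htT
        _ = RU * ∑ g, ut g t := by rw [Finset.mul_sum]
    · intro t ht1 htT
      have ht1T : t - 1 ≤ T := le_trans (Nat.sub_le t 1) htT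
      rw [hp t htT, hp (t - 1) ht1T, hrm t htT, hu (t - 1) ht1T]
      calc -(∑ g, pt g t) + (∑ g, pt g (t - 1)) + ∑ g, rmt g t
          = ∑ g, (-(pt g t) + pt g (t - 1) + rmt g t) := by
            rw [Finset.sum_add_distrib, Finset.sum_add_distrib, Finset.sum_neg_distrib]
        _ ≤ ∑ g, RD * ut g (t - 1) := Finset.sum_le_sum fun g _ => hrd g t ht1 htT
        _ = RD * ∑ g, ut g (t - 1) := by rw [Finset.mul_sum]
  refine ⟨hsub, fun cost hne hbdd => ?_⟩
  exact csInf_le_csInf hbdd (hne.image cost) (Set.image_mono (f := cost) hsub)
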